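/- Let d ≥ 1 and ρ > 0. Let O_d, I_d ∈ ℝ^{d×d} be the zero and identity matrices; let A ∈ ℝ^{2d×2d} be the block matrix with blocks [[O_d, O_d],[O_d, I_d]] and B = [O_d, I_d] ∈ ℝ^{d×2d}. Define the 3d×3d block matrices C = [[ρA, 0],[B, (1/ρ)I_d]], D = [[ρA, 0],[0, (1/ρ)I_d]], E = [[I_{2d}, 0],[ρB, I_d]] and G = C + Cᵀ − EᵀDE. Then C = D·E, BᵀB = A, and G = (1/ρ)·[[O_d, 0],[0, A]]; in particular G is symmetric positive semidefinite. -/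

import Mathlib

open Matrix

/-- Structural matrices of the variational inequality reformulation of neADMM:
with `A = [[0,0],[0,I_d]]`, `B = [0, I_d]`,
`C = [[ρA, 0],[B, (1/ρ)I_d]]`, `D = [[ρA, 0],[0, (1/ρ)I_d]]`, `E = [[I_{2d}, 0],[ρB, I_d]]`
and `G = C + Cᵀ − EᵀDE`, one has `C = D·E`, `BᵀB = A`, and
`G = (1/ρ)·[[O_d, 0],[0, A]]` (expressed by regrouping the `3d` coordinates via
`Equiv.sumAssoc`); in particular `G` is symmetric positive semidefinite. -/
theorem neADMM_VI_matrices (d : ℕ) (hd : 1 ≤ d) (ρ : ℝ) (hρ : 0 < ρ)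
    (A : Matrix (Fin d ⊕ Fin d) (Fin d ⊕ Fin d) ℝ)
    (hA : A = Matrix.fromBlocks 0 0 0 1)
    (B : Matrix (Fin d) (Fin d ⊕ Fin d) ℝ)
    (hB : B = Matrix.fromCols 0 1)
    (C D E G : Matrix ((Fin d ⊕ Fin d) ⊕ Fin d) ((Fin d ⊕ Fin d) ⊕ Fin d) ℝ)
    (hC : C = Matrix.fromBlocks (ρ • A) 0 B ((1 / ρ) • 1))
    (hD : D = Matrix.fromBlocks (ρ • A) 0 0 ((1 / ρ) • 1))
    (hE : E = Matrix.fromBlocks 1 0 (ρ • B) 1)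
    (hG : G = C + Cᵀ - Eᵀ * D * E) :
    C = D * E ∧ Bᵀ * B = A ∧
    Matrix.reindex (Equiv.sumAssoc (Fin d) (Fin d) (Fin d))
        (Equiv.sumAssoc (Fin d) (Fin d) (Fin d)) G =
      (1 / ρ) • Matrix.fromBlocks (0 : Matrix (Fin d) (Fin d) ℝ) 0 0 A ∧
    G.IsSymm ∧ G.PosSemidef := by
  have hρ' : ρ ≠ 0 := ne_of_gt hρ
  have hBtB : Bᵀ * B = A := by
    subst hB hA
    rw [transpose_fromCols, fromRows_mul, mul_fromCols, mul_fromCols]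
    simp [Matrix.fromBlocks]
    ext (i | i) (j | j) <;> simp [Matrix.fromBlocks, Matrix.one_apply, eq_comm]
  have hAt : Aᵀ = A := by
    subst hA
    ext (i | i) (j | j) <;> simp [Matrix.fromBlocks, Matrix.one_apply, eq_comm]
  have hDE : C = D * E := by
    rw [hC, hD, hE, fromBlocks_multiply]
    simp
    rw [smul_smul, mul_inv_cancel₀ hρ', one_smul]
  have hGval : G = Matrix.fromBlocks 0 0 0 ((1 / ρ) • 1) := by
    subst hG hC hD hE
    rw [fromBlocks_transpose, fromBlocks_transpose, fromBlocks_multiply, fromBlocks_multiply]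
    simp [hAt, Matrix.transpose_smul, Matrix.mul_smul, Matrix.smul_mul, hBtB]
    ext (i | i) (j | j) <;>
      simp [smul_smul, mul_inv_cancel₀ hρ', inv_mul_cancel₀ hρ', two_smul]
  refine ⟨hDE, hBtB, ?_, ?_, ?_⟩
  · ext (i | i | i) (j | j | j) <;>
      simp [hGval, hA, Matrix.fromBlocks, Equiv.sumAssoc, Matrix.submatrix_apply]
  · rw [Matrix.IsSymm, hGval, fromBlocks_transpose]
    simp
  · set M : Matrix ((Fin d ⊕ Fin d) ⊕ Fin d) ((Fin d ⊕ Fin d) ⊕ Fin d) ℝ :=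
      Matrix.fromBlocks 0 0 0 ((Real.sqrt ρ)⁻¹ • 1) with hM
    have hGM : G = Mᴴ * M := by
      rw [hGval, hM]
      rw [fromBlocks_conjTranspose, fromBlocks_multiply]
      have hs : (Real.sqrt ρ)⁻¹ ≠ 0 := by positivity
      ext (i | i) (j | j) <;>
        simp [Matrix.conjTranspose_apply, Matrix.one_apply, smul_smul, ← mul_inv,
          Real.mul_self_sqrt hρ.le, one_div, eq_comm]
    rw [hGM]
    exact Matrix.posSemidef_conjTranspose_mul_self M
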